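/- arXiv:1102.2904 — 2 statements merged into one kernel-verified Lean document; each statement's English description precedes it below -/
import Mathlib

section
/- (Lemma 1, lower bound) In the symmetric model, the no-interference average rate satisfies R_up(n) ≥ log₂(ρ·log n) − log₂(log n)/log n + o(log(log n)/log n); that is, there is a function h with h(n)·log n/log(log n) → 0 such that for all sufficiently large n, E[log₂(1+α^up_n)] ≥ log₂(ρ·log n) − log₂(log n)/log n + h(n). -/
open MeasureTheory ProbabilityTheory Filter Real

/-- The maximum of `f k` over the indices `k ∈ {1, …, n}`. -/
noncomputable def maxIcc (n : ℕ) (f : ℕ → ℝ) : ℝ :=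
  ⨆ k : (Finset.Icc 1 n : Finset ℕ), f k

section aux
open Topology

lemma gpdf_eq : gammaPDF 1 1 = exponentialPDF 1 := rfl

lemma expIic {x : ℝ} : expMeasure 1 (Set.Iic x)
    = ENNReal.ofReal (if 0 ≤ x then 1 - Real.exp (-x) else 0) := by
  rw [expMeasure, gammaMeasure, withDensity_apply _ measurableSet_Iic, gpdf_eq]
  simpa using lintegral_exponentialPDF_eq_antiDeriv one_pos x

lemma expNeg : expMeasure 1 {x : ℝ | x < 0} = 0 := by
  rw [expMeasure, gammaMeasure]
  rw [show {x : ℝ | x < 0} = Set.Iio 0 from rfl, withDensity_apply _ measurableSet_Iio, gpdf_eq]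
  exact lintegral_exponentialPDF_of_nonpos le_rfl

lemma expInt : Integrable (fun x : ℝ => x) (expMeasure 1) := by
  rw [expMeasure, gammaMeasure, show gammaPDF 1 1 = fun x => ENNReal.ofReal (gammaPDFReal 1 1 x)
    from rfl]
  rw [integrable_withDensity_iff (measurable_gammaPDFReal 1 1).ennreal_ofReal
    (ae_of_all _ fun x => ENNReal.ofReal_lt_top)]
  set f : ℝ → ℝ := fun x => x * (ENNReal.ofReal (gammaPDFReal 1 1 x)).toReal with hf
  rw [← integrableOn_univ, ← Set.Iic_union_Ioi (a := (0:ℝ)), integrableOn_union]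
  constructor
  · refine (integrableOn_zero).congr_fun (fun x hx => ?_) measurableSet_Iic
    have hx0 : x ≤ 0 := hx
    rcases lt_or_eq_of_le hx0 with h | h
    · simp [hf, gammaPDFReal, not_le.mpr h]
    · simp [hf, h]
  · have key : IntegrableOn (fun x : ℝ => Real.exp (-x) * x ^ ((2:ℝ) - 1)) (Set.Ioi 0) :=
      Real.GammaIntegral_convergent (by norm_num)
    refine key.congr_fun (fun x hx => ?_) measurableSet_Ioi
    have hx0 : (0:ℝ) < x := hx
    have hpdf : gammaPDFReal 1 1 x = Real.exp (-x) := by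
      rw [gammaPDFReal, if_pos hx0.le, Real.Gamma_one]
      simp [Real.rpow_natCast]
    rw [hf]
    simp only [hpdf, ENNReal.toReal_ofReal (Real.exp_pos _).le]
    rw [show ((2:ℝ)-1) = (1:ℝ) by norm_num, Real.rpow_one]
    ring

lemma hlogN : Tendsto (fun n : ℕ => Real.log n) atTop atTop :=
  Real.tendsto_log_atTop.comp tendsto_natCast_atTop_atTop

lemma hllgN : Tendsto (fun n : ℕ => Real.log (Real.log n)) atTop atTop :=
  Real.tendsto_log_atTop.comp hlogN

lemma hratioN : Tendsto (fun n : ℕ => Real.log (Real.log n) / Real.log n) atTop (𝓝 0) := by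
  have base : Tendsto (fun x : ℝ => Real.log x / x) atTop (𝓝 0) := by
    have := Real.tendsto_pow_log_div_mul_add_atTop 1 0 1 one_ne_zero
    simpa using this
  exact base.comp hlogN

lemma hlogsqN : Tendsto (fun n : ℕ => (Real.log n)^2 / n) atTop (𝓝 0) := by
  have := (Real.tendsto_pow_log_div_mul_add_atTop 1 0 2 one_ne_zero).comp
    tendsto_natCast_atTop_atTop
  simpa [Function.comp_def] using this

lemma hlog1N : Tendsto (fun n : ℕ => Real.log n / n) atTop (𝓝 0) := by
  have := (Real.tendsto_pow_log_div_mul_add_atTop 1 0 1 one_ne_zero).comp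
    tendsto_natCast_atTop_atTop
  simpa [Function.comp_def] using this

lemma slopeLog : Tendsto (fun y : ℝ => Real.log (1 + y) / y) (𝓝[≠] (0:ℝ)) (𝓝 1) := by
  have hd : HasDerivAt (fun x : ℝ => Real.log (1 + x)) 1 0 := by
    have := ((hasDerivAt_id (0:ℝ)).const_add 1).log (by norm_num)
    simpa using this
  have := hasDerivAt_iff_tendsto_slope.mp hd
  refine this.congr (fun y => ?_)
  simp [slope_def_field, div_eq_mul_inv]


noncomputable def hfun (ρ : ℝ) (n : ℕ) : ℝ :=
  Real.logb 2 (1 + ρ * (Real.log n - Real.log (Real.log n))) * (1 - (1 - Real.log n / n)^n)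
    - Real.logb 2 (ρ * Real.log n) + Real.logb 2 (Real.log n) / Real.log n

lemma analysis (ρ : ℝ) (hρ : 0 < ρ) :
    Tendsto (fun n : ℕ => hfun ρ n * Real.log n / Real.log (Real.log n)) atTop (𝓝 0) := by
  have hlog2 : (0:ℝ) < Real.log 2 := Real.log_pos one_lt_two
  set L : ℕ → ℝ := fun n => Real.log n with hLdef
  set LL : ℕ → ℝ := fun n => Real.log (Real.log n) with hLLdef
  set u : ℕ → ℝ := fun n => 1 / (ρ * L n) - LL n / L n with hudef
  set A : ℕ → ℝ := fun n => Real.logb 2 (1 + ρ * (L n - LL n)) with hAdef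
  set p : ℕ → ℝ := fun n => (1 - L n / (n:ℝ))^n with hpdef
  -- basic limits
  have hu0 : Tendsto u atTop (𝓝 0) := by
    have h1 : Tendsto (fun n : ℕ => 1 / (ρ * L n)) atTop (𝓝 0) := by
      simpa only [one_div, Pi.inv_def] using (hlogN.const_mul_atTop hρ).inv_tendsto_atTop
    simpa only [sub_zero] using h1.sub hratioN
  -- eventual basic facts
  have hevbase : ∀ᶠ n : ℕ in atTop,
      1 < L n ∧ 1 < LL n ∧ 1/ρ < LL n ∧ (1:ℝ) ≤ (n:ℝ) := by
    filter_upwards [hlogN.eventually_gt_atTop 1, hllgN.eventually_gt_atTop 1,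
      hllgN.eventually_gt_atTop (1/ρ), eventually_ge_atTop 1] with n h1 h2 h3 h4
    exact ⟨h1, h2, h3, by exact_mod_cast h4⟩
  have huneg : ∀ᶠ n : ℕ in atTop, u n < 0 := by
    filter_upwards [hevbase] with n hn
    obtain ⟨h1, h2, h3, h4⟩ := hn
    have hL0 : 0 < L n := by linarith
    have : u n = (1/ρ - LL n) / L n := by
      rw [hudef]; field_simp
    rw [this]
    exact div_neg_of_neg_of_pos (by linarith) hL0
  have hune : ∀ᶠ n : ℕ in atTop, u n ≠ 0 := huneg.mono fun n h => h.ne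
  have hfac1 : Tendsto (fun n : ℕ => Real.log (1 + u n) / u n) atTop (𝓝 1) :=
    slopeLog.comp (tendsto_nhdsWithin_iff.mpr ⟨hu0, hune⟩)
  have hfac2 : Tendsto (fun n : ℕ => u n * L n / LL n) atTop (𝓝 (-1)) := by
    have hlim : Tendsto (fun n : ℕ => 1 / (ρ * LL n) - 1) atTop (𝓝 (-1)) := by
      have h1 : Tendsto (fun n : ℕ => 1 / (ρ * LL n)) atTop (𝓝 0) := by
        simpa only [one_div, Pi.inv_def] using (hllgN.const_mul_atTop hρ).inv_tendsto_atTop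
      simpa only [zero_sub] using h1.sub (tendsto_const_nhds : Tendsto (fun _ : ℕ => (1:ℝ)) atTop _)
    refine hlim.congr' ?_
    filter_upwards [hevbase] with n hn
    obtain ⟨h1, h2, h3, h4⟩ := hn
    have hL0 : L n ≠ 0 := by positivity
    have hLL0 : LL n ≠ 0 := by positivity
    rw [hudef]; field_simp
  have hKey : Tendsto (fun n : ℕ => Real.log (1 + u n) * L n / LL n) atTop (𝓝 (-1)) := by
    have hm := hfac1.mul hfac2
    rw [one_mul] at hm
    refine hm.congr' ?_
    filter_upwards [hune, hevbase] with n h0 hn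
    obtain ⟨h1, h2, h3, h4⟩ := hn
    have hLL0 : LL n ≠ 0 := by positivity
    field_simp
  -- the h1 part
  have hh1 : Tendsto (fun n : ℕ =>
      (A n - Real.logb 2 (ρ * L n) + Real.logb 2 (L n) / L n) * L n / LL n) atTop (𝓝 0) := by
    have hlim : Tendsto (fun n : ℕ =>
        (Real.log (1 + u n) * L n / LL n + 1) / Real.log 2) atTop (𝓝 0) := by
      have hm := (hKey.add (tendsto_const_nhds : Tendsto (fun _ : ℕ => (1:ℝ)) atTop _)).div_const
        (Real.log 2)
      simpa using hm
    refine hlim.congr' ?_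
    filter_upwards [hevbase, huneg] with n hn hun
    obtain ⟨h1, h2, h3, h4⟩ := hn
    have hL0 : (0:ℝ) < L n := by linarith
    have hLL0 : (0:ℝ) < LL n := by linarith
    have hρL : (0:ℝ) < ρ * L n := by positivity
    have hupos : (0:ℝ) < 1 + u n := by
      have hLLL : LL n / L n < 1 := by
        rw [div_lt_one hL0]
        calc LL n ≤ L n - 1 := Real.log_le_sub_one_of_pos hL0
        _ < L n := by linarith
      have h5 : 0 < 1 / (ρ * L n) := by positivity
      rw [hudef]
      dsimp only
      linarith
    have harg : 1 + ρ * (L n - LL n) = (1 + u n) * (ρ * L n) := by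
      rw [hudef]; field_simp; ring
    have hAeq : A n = (Real.log (1 + u n) + Real.log (ρ * L n)) / Real.log 2 := by
      rw [hAdef]
      dsimp only
      rw [harg, ← Real.log_div_log, Real.log_mul hupos.ne' hρL.ne']
    rw [hAeq, ← Real.log_div_log, ← Real.log_div_log]
    have hLLL : Real.log (L n) = LL n := rfl
    rw [hLLL]
    field_simp
    ring
  -- the h2 part
  have hh2 : Tendsto (fun n : ℕ => (-(A n * p n)) * L n / LL n) atTop (𝓝 0) := by
    have hlim : Tendsto (fun n : ℕ =>
        (1 / Real.log 2) * (L n / (n:ℝ) + ρ * ((L n)^2 / (n:ℝ)))) atTop (𝓝 0) := by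
      have hm := (hlog1N.add (hlogsqN.const_mul ρ)).const_mul (1 / Real.log 2)
      simpa using hm
    refine squeeze_zero_norm' ?_ hlim
    filter_upwards [hevbase] with n hn
    obtain ⟨h1, h2, h3, h4⟩ := hn
    have hn0 : (0:ℝ) < (n:ℝ) := by linarith
    have hL0 : (0:ℝ) < L n := by linarith
    have hLL1 : (1:ℝ) ≤ LL n := h2.le
    have hLleN : L n ≤ (n:ℝ) := by
      calc L n ≤ (n:ℝ) - 1 := Real.log_le_sub_one_of_pos hn0
      _ ≤ (n:ℝ) := by linarith
    have hLLL : LL n < L n := by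
      calc LL n ≤ L n - 1 := Real.log_le_sub_one_of_pos hL0
      _ < L n := by linarith
    -- bounds on A
    have hA0 : 0 ≤ A n := by
      rw [hAdef]
      refine Real.logb_nonneg one_lt_two ?_
      nlinarith
    have hAle : A n ≤ (1 + ρ * L n) / Real.log 2 := by
      rw [hAdef]
      dsimp only
      rw [← Real.log_div_log]
      apply div_le_div_of_nonneg_right ?_ hlog2.le
      calc Real.log (1 + ρ * (L n - LL n)) ≤ Real.log (1 + ρ * L n) := by
            apply Real.log_le_log (by nlinarith)
            nlinarith
        _ ≤ 1 + ρ * L n := (Real.log_le_sub_one_of_pos (by nlinarith)).trans (by linarith)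
    -- bounds on p
    have hp0 : 0 ≤ p n := by
      rw [hpdef]
      apply pow_nonneg
      rw [sub_nonneg, div_le_one hn0]
      exact hLleN
    have hple : p n ≤ 1 / (n:ℝ) := by
      rw [hpdef]
      dsimp only
      calc (1 - L n / (n:ℝ))^n ≤ (Real.exp (-(L n / (n:ℝ))))^n := by
            apply pow_le_pow_left₀ (by rw [sub_nonneg, div_le_one hn0]; exact hLleN)
            linarith [Real.add_one_le_exp (-(L n / (n:ℝ)))]
        _ = Real.exp ((n:ℕ) * (-(L n / (n:ℝ)))) := (Real.exp_nat_mul _ n).symm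
        _ = Real.exp (-(L n)) := by rw [mul_comm]; congr 1; field_simp
        _ = 1 / (n:ℝ) := by
            rw [Real.exp_neg, hLdef]
            dsimp only
            rw [Real.exp_log hn0, one_div]
    -- the squeeze
    have hnorm : ‖(-(A n * p n)) * L n / LL n‖ = A n * p n * L n / LL n := by
      rw [Real.norm_eq_abs, abs_of_nonpos (by
        apply div_nonpos_of_nonpos_of_nonneg ?_ (by linarith : (0:ℝ) ≤ LL n)
        have h6 : 0 ≤ A n * p n * L n := by positivity
        linarith)]
      ring
    rw [hnorm]
    calc A n * p n * L n / LL n ≤ A n * p n * L n := by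
          apply div_le_self (by positivity) hLL1
      _ ≤ ((1 + ρ * L n) / Real.log 2) * (1 / (n:ℝ)) * L n := by
          apply mul_le_mul_of_nonneg_right ?_ hL0.le
          exact mul_le_mul hAle hple hp0 (by positivity)
      _ = (1 / Real.log 2) * (L n / (n:ℝ) + ρ * ((L n)^2 / (n:ℝ))) := by
          field_simp
  -- combine
  have hfinal := hh1.add hh2
  rw [add_zero] at hfinal
  refine hfinal.congr (fun n => ?_)
  show _ = hfun ρ n * L n / LL n
  rw [hfun, hAdef, hpdef]
  dsimp only
  ring

end aux

open Topology in
/-- Lemma 1, lower bound: in the symmetric model, the no-interference average rate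
satisfies `E[log₂(1+α^up n)] ≥ log₂(ρ log n) - log₂(log n)/log n + o(log(log n)/log n)`. -/

theorem no_interference_rate_lower_bound
    {Ω : Type*} [MeasurableSpace Ω] (P : Measure Ω) [IsProbabilityMeasure P]
    (N : ℕ) (hN : 1 ≤ N) (ρ : ℝ) (hρ : 0 < ρ)
    (G : Option (Fin N) × ℕ → Ω → ℝ) (hGmeas : ∀ i, Measurable (G i))
    (hGindep : iIndepFun G P)
    (hGdist : ∀ i, Measure.map (G i) P = expMeasure 1)
    (α β : ℕ → Ω → ℝ)
    (hα : ∀ k ω, α k ω = ρ * G (none, k) ω)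
    (hβ : ∀ k ω, β k ω = ρ * ∑ j : Fin N, G (some j, k) ω)
    (αup : ℕ → Ω → ℝ) (hαup : ∀ n ω, αup n ω = maxIcc n (fun k => α k ω)) :
    ∃ h : ℕ → ℝ,
      Tendsto (fun n : ℕ => h n * Real.log n / Real.log (Real.log n)) atTop (nhds 0) ∧
      ∀ᶠ n : ℕ in atTop,
        (∫ ω, Real.logb 2 (1 + αup n ω) ∂P)
          ≥ Real.logb 2 (ρ * Real.log n) - Real.logb 2 (Real.log n) / Real.log n + h n := by
  classical
  have hlog2 : (0:ℝ) < Real.log 2 := Real.log_pos one_lt_two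
  refine ⟨hfun ρ, analysis ρ hρ, ?_⟩
  set t : ℕ → ℝ := fun n => Real.log n - Real.log (Real.log n) with htdef
  -- a.e. nonnegativity
  have hGae : ∀ i, ∀ᵐ ω ∂P, 0 ≤ G i ω := by
    intro i
    have h0 : P (G i ⁻¹' {x : ℝ | x < 0}) = 0 := by
      change P (G i ⁻¹' Set.Iio 0) = 0
      rw [← Measure.map_apply (hGmeas i) measurableSet_Iio, hGdist i]
      exact expNeg
    rw [ae_iff]
    simpa [not_le] using h0
  -- integrability
  have hGint : ∀ i, Integrable (G i) P := by
    intro i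
    have h0 : Integrable (fun x : ℝ => x) (Measure.map (G i) P) := by
      rw [hGdist i]; exact expInt
    exact (integrable_map_measure aestronglyMeasurable_id (hGmeas i).aemeasurable).mp h0
  -- CDF
  have hCDF : ∀ i, ∀ s : ℝ, 0 ≤ s →
      P (G i ⁻¹' Set.Iic s) = ENNReal.ofReal (1 - Real.exp (-s)) := by
    intro i s hs
    rw [← Measure.map_apply (hGmeas i) measurableSet_Iic, hGdist i, expIic, if_pos hs]
  -- measurability of αup
  have hαmeas : ∀ k, Measurable (α k) := by
    intro k
    have : α k = fun ω => ρ * G (none, k) ω := funext (hα k)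
    rw [this]
    exact (hGmeas _).const_mul ρ
  have hαupmeas : ∀ n, Measurable (αup n) := by
    intro n
    have h1 : αup n = fun ω => ⨆ k : (Finset.Icc 1 n : Finset ℕ), α (k:ℕ) ω := by
      funext ω; rw [hαup n ω]; rfl
    rw [h1]
    exact Measurable.iSup fun k => hαmeas _
  have hfmeas : ∀ n, Measurable (fun ω => Real.logb 2 (1 + αup n ω)) := by
    intro n
    have h1 : (fun ω => Real.logb 2 (1 + αup n ω))
        = fun ω => Real.log (1 + αup n ω) / Real.log 2 := by
      funext ω; rw [Real.log_div_log]
    rw [h1]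
    exact ((measurable_const.add (hαupmeas n)).log).div_const _
  -- main eventual statement
  filter_upwards [eventually_ge_atTop 1, hlogN.eventually_gt_atTop 1,
    hllgN.eventually_gt_atTop 0] with n hn1 hL1 hLL0
  set L : ℝ := Real.log n with hLdef
  set LL : ℝ := Real.log (Real.log n) with hLLdef
  have hn0 : (0:ℝ) < n := by
    have : (1:ℝ) ≤ (n:ℝ) := by exact_mod_cast hn1
    linarith
  have hLleN : L ≤ (n:ℝ) := (Real.log_le_sub_one_of_pos hn0).trans (by linarith)
  have hLLL : LL < L := by
    have := Real.log_le_sub_one_of_pos (by linarith : (0:ℝ) < L)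
    linarith
  have htn : t n = L - LL := rfl
  have htpos : 0 < t n := by rw [htn]; linarith
  have hexp_t : Real.exp (-(t n)) = L / n := by
    rw [htn, neg_sub, Real.exp_sub, Real.exp_log (by linarith : (0:ℝ) < L), Real.exp_log hn0]
  -- the event B
  set S : Finset (Option (Fin N) × ℕ) :=
    (Finset.Icc 1 n).image (fun k => ((none : Option (Fin N)), k)) with hSdef
  set B : Set Ω := ⋂ i ∈ S, G i ⁻¹' Set.Iic (t n) with hBdef
  have hBmeas : MeasurableSet B := by
    exact Set.Finite.measurableSet_biInter S.finite_toSet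
      (fun i _ => (hGmeas i) measurableSet_Iic)
  have hPB : P B = ENNReal.ofReal ((1 - L / n) ^ n) := by
    rw [hBdef, hGindep.meas_biInter (fun i _ => ⟨Set.Iic (t n), measurableSet_Iic, rfl⟩)]
    have hcard : S.card = n := by
      rw [hSdef, Finset.card_image_of_injective _ (fun a b hab => by
        simpa using hab), Nat.card_Icc]
      omega
    rw [Finset.prod_congr rfl (fun i _ => hCDF i (t n) htpos.le), Finset.prod_const, hcard,
      hexp_t, ← ENNReal.ofReal_pow (by rw [sub_nonneg, div_le_one hn0]; exact hLleN)]
  -- lower bound for αup off B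
  have hcompl : ∀ ω, ω ∉ B → Real.logb 2 (1 + ρ * t n) ≤ Real.logb 2 (1 + αup n ω) := by
    intro ω hω
    simp only [hBdef, Set.mem_iInter, Set.mem_preimage, Set.mem_Iic, not_forall] at hω
    obtain ⟨i, hiS, hgt⟩ := hω
    push_neg at hgt
    rw [hSdef, Finset.mem_image] at hiS
    obtain ⟨k, hk, rfl⟩ := hiS
    have hle : ρ * t n ≤ αup n ω := by
      rw [hαup n ω, maxIcc]
      have hbdd : BddAbove (Set.range fun j : (Finset.Icc 1 n : Finset ℕ) => α (j:ℕ) ω) :=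
        (Set.finite_range _).bddAbove
      refine le_trans ?_ (le_ciSup hbdd (⟨k, hk⟩ : (Finset.Icc 1 n : Finset ℕ)))
      rw [hα]
      exact mul_le_mul_of_nonneg_left hgt.le hρ.le
    refine (Real.logb_le_logb one_lt_two (by nlinarith) (by nlinarith)).mpr (by linarith)
  -- a.e. nonneg of the integrand and domination
  have haeE : ∀ᵐ ω ∂P, ∀ k : ℕ, 0 ≤ G (none, k) ω :=
    ae_all_iff.mpr fun k => hGae _
  have haeprop : ∀ᵐ ω ∂P, 0 ≤ αup n ω ∧
      αup n ω ≤ ρ * ∑ k ∈ Finset.Icc 1 n, G (none, k) ω := by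
    filter_upwards [haeE] with ω hE
    have hbdd : BddAbove (Set.range fun j : (Finset.Icc 1 n : Finset ℕ) => α (j:ℕ) ω) :=
      (Set.finite_range _).bddAbove
    have hmem : (1:ℕ) ∈ Finset.Icc 1 n := by simp [hn1]
    constructor
    · rw [hαup n ω, maxIcc]
      refine le_trans ?_ (le_ciSup hbdd (⟨1, hmem⟩ : (Finset.Icc 1 n : Finset ℕ)))
      rw [hα]
      exact mul_nonneg hρ.le (hE 1)
    · rw [hαup n ω, maxIcc]
      have hne : Nonempty (Finset.Icc 1 n : Finset ℕ) := ⟨⟨1, hmem⟩⟩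
      refine ciSup_le fun j => ?_
      rw [hα]
      refine mul_le_mul_of_nonneg_left ?_ hρ.le
      exact Finset.single_le_sum (fun k _ => hE k) j.2
  have hfae : ∀ᵐ ω ∂P, 0 ≤ Real.logb 2 (1 + αup n ω) := by
    filter_upwards [haeprop] with ω hω
    exact Real.logb_nonneg one_lt_two (by linarith [hω.1])
  have hInt : Integrable (fun ω => Real.logb 2 (1 + αup n ω)) P := by
    have hg : Integrable (fun ω => (ρ / Real.log 2) *
        ∑ k ∈ Finset.Icc 1 n, G (none, k) ω) P :=
      (integrable_finset_sum _ (fun k _ => hGint _)).const_mul _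
    refine hg.mono ((hfmeas n).aestronglyMeasurable) ?_
    filter_upwards [haeprop, haeE] with ω hω hE
    have h0 : 0 ≤ αup n ω := hω.1
    have hsum0 : 0 ≤ ∑ k ∈ Finset.Icc 1 n, G (none, k) ω :=
      Finset.sum_nonneg fun k _ => hE k
    rw [Real.norm_eq_abs, Real.norm_eq_abs,
      abs_of_nonneg (Real.logb_nonneg one_lt_two (by linarith)),
      abs_of_nonneg (by positivity)]
    have hlog : Real.logb 2 (1 + αup n ω) ≤ αup n ω / Real.log 2 := by
      rw [← Real.log_div_log]
      refine div_le_div_of_nonneg_right ?_ hlog2.le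
      have := Real.log_le_sub_one_of_pos (by linarith : (0:ℝ) < 1 + αup n ω)
      linarith
    refine hlog.trans ?_
    rw [div_le_iff₀ hlog2] at *
    calc αup n ω ≤ ρ * ∑ k ∈ Finset.Icc 1 n, G (none, k) ω := hω.2
      _ = ρ / Real.log 2 * (∑ k ∈ Finset.Icc 1 n, G (none, k) ω) * Real.log 2 := by
          field_simp
  -- integral lower bound
  have hPBc : (P Bᶜ).toReal = 1 - (1 - L / n)^n := by
    rw [measure_compl hBmeas (measure_ne_top P B), hPB, measure_univ]
    rw [ENNReal.toReal_sub_of_le (ENNReal.ofReal_le_one.mpr (by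
      refine pow_le_one₀ ?_ ?_
      · rw [sub_nonneg, div_le_one hn0]; exact hLleN
      · have : 0 < L / n := by positivity
        linarith)) ENNReal.one_ne_top]
    rw [ENNReal.toReal_one, ENNReal.toReal_ofReal (by
      refine pow_nonneg ?_ _
      rw [sub_nonneg, div_le_one hn0]; exact hLleN)]
  have hstep1 : ∫ ω in Bᶜ, Real.logb 2 (1 + αup n ω) ∂P
      ≤ ∫ ω, Real.logb 2 (1 + αup n ω) ∂P :=
    setIntegral_le_integral hInt hfae
  have hstep2 : Real.logb 2 (1 + ρ * t n) * (P Bᶜ).toReal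
      ≤ ∫ ω in Bᶜ, Real.logb 2 (1 + αup n ω) ∂P := by
    refine setIntegral_ge_of_const_le_real hBmeas.compl (measure_ne_top P _)
      (fun ω hω => hcompl ω hω) hInt.integrableOn
  -- conclusion
  have hmain : Real.logb 2 (1 + ρ * t n) * (1 - (1 - L / n)^n)
      ≤ ∫ ω, Real.logb 2 (1 + αup n ω) ∂P := by
    rw [← hPBc]
    exact hstep2.trans hstep1
  refine le_trans (le_of_eq ?_) hmain
  rw [hfun]
  simp only [htdef, hLdef, hLLdef]
  ring
end

section
/- (Lemma 2, upper bound) In the symmetric model, the average rate of the max-SINR scheduler satisfies R(n) ≤ log₂(ρ·log n) − (N−1)·log₂(log n)/log n + o(log(log n)/log n); that is, there is a function h with h(n)·log n/log(log n) → 0 such that for all sufficiently large n, E[log₂(1+Γ_n)] ≤ log₂(ρ·log n) − (N−1)·log₂(log n)/log n + h(n). -/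
open MeasureTheory ProbabilityTheory Filter Real
open scoped ENNReal NNReal

section AuxExp

open Set

lemma exponentialPDFReal_one' (x : ℝ) :
    exponentialPDFReal 1 x = if 0 ≤ x then Real.exp (-x) else 0 := by
  unfold exponentialPDFReal gammaPDFReal
  simp [Real.Gamma_one]

lemma expMeasure_Iio_zero' : expMeasure 1 (Iio 0) = 0 := by
  have hd : expMeasure 1 = volume.withDensity (fun x => ENNReal.ofReal (exponentialPDFReal 1 x)) :=
    rfl
  rw [hd, withDensity_apply _ measurableSet_Iio]
  exact lintegral_exponentialPDF_of_nonpos le_rfl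

lemma integral_expMeasure_one' (g : ℝ → ℝ) :
    ∫ x, g x ∂(expMeasure 1) = ∫ x in Ioi (0:ℝ), Real.exp (-x) * g x := by
  have hd : expMeasure 1
      = volume.withDensity (fun x => ((exponentialPDFReal 1 x).toNNReal : ℝ≥0∞)) := rfl
  rw [hd, integral_withDensity_eq_integral_smul (measurable_exponentialPDFReal 1).real_toNNReal]
  have : ∀ x : ℝ, (exponentialPDFReal 1 x).toNNReal • g x
      = Set.indicator (Ici (0:ℝ)) (fun x => Real.exp (-x) * g x) x := by
    intro x
    rw [NNReal.smul_def, smul_eq_mul,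
      Real.coe_toNNReal _ (exponentialPDFReal_nonneg one_pos x), exponentialPDFReal_one']
    by_cases hx : 0 ≤ x
    · rw [if_pos hx, Set.indicator_of_mem (mem_Ici.2 hx)]
    · rw [if_neg hx, Set.indicator_of_notMem (by simpa using hx), zero_mul]
  simp_rw [this]
  rw [integral_indicator measurableSet_Ici, integral_Ici_eq_integral_Ioi]

lemma integral_exp_mul_expMeasure' {c : ℝ} (hc : c < 1) :
    ∫ x, Real.exp (c * x) ∂(expMeasure 1) = (1 - c)⁻¹ := by
  rw [integral_expMeasure_one']
  have h1 : ∀ x : ℝ, Real.exp (-x) * Real.exp (c * x) = Real.exp (-(1-c) * x) := by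
    intro x; rw [← Real.exp_add]; ring_nf
  simp_rw [h1]
  have hb : 0 < 1 - c := by linarith
  have := integral_exp_neg_mul_rpow (p := 1) (b := 1 - c) one_pos hb
  simp_rw [Real.rpow_one] at this
  rw [this]
  norm_num [Real.Gamma_two, Real.rpow_neg_one]

lemma integrable_exp_mul_expMeasure' {c : ℝ} (hc : c < 1) :
    Integrable (fun x => Real.exp (c * x)) (expMeasure 1) := by
  have hd : expMeasure 1
      = volume.withDensity (fun x => ((exponentialPDFReal 1 x).toNNReal : ℝ≥0∞)) := rfl
  rw [hd, integrable_withDensity_iff_integrable_smul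
    (measurable_exponentialPDFReal 1).real_toNNReal]
  have : ∀ x : ℝ, (exponentialPDFReal 1 x).toNNReal • Real.exp (c * x)
      = Set.indicator (Ici (0:ℝ)) (fun x => Real.exp (-(1-c) * x)) x := by
    intro x
    rw [NNReal.smul_def, smul_eq_mul,
      Real.coe_toNNReal _ (exponentialPDFReal_nonneg one_pos x), exponentialPDFReal_one']
    by_cases hx : 0 ≤ x
    · rw [if_pos hx, Set.indicator_of_mem (mem_Ici.2 hx), ← Real.exp_add]; ring_nf
    · rw [if_neg hx, Set.indicator_of_notMem (by simpa using hx), zero_mul]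
  simp_rw [this]
  rw [integrable_indicator_iff measurableSet_Ici, IntegrableOn,
    ← restrict_Ioi_eq_restrict_Ici]
  exact exp_neg_integrableOn_Ioi 0 (by linarith)

variable {Ω : Type*} [MeasurableSpace Ω] {P : Measure Ω}

lemma rv_integral_exp' {X : Ω → ℝ} (hX : Measurable X) (hdist : Measure.map X P = expMeasure 1)
    {c : ℝ} (hc : c < 1) : ∫ ω, Real.exp (c * X ω) ∂P = (1 - c)⁻¹ := by
  have := integral_map (μ := P) hX.aemeasurable
    (f := fun x => Real.exp (c * x)) ((measurable_id.const_mul c).exp.aestronglyMeasurable)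
  rw [hdist] at this
  rw [← this, integral_exp_mul_expMeasure' hc]

lemma rv_integrable_exp' {X : Ω → ℝ} (hX : Measurable X) (hdist : Measure.map X P = expMeasure 1)
    {c : ℝ} (hc : c < 1) : Integrable (fun ω => Real.exp (c * X ω)) P := by
  have h := (integrable_map_measure (μ := P) (f := X)
    (g := fun x => Real.exp (c * x))
    (by rw [hdist]; exact (measurable_id.const_mul c).exp.aestronglyMeasurable)
    hX.aemeasurable).mp
  have := h (by rw [hdist]; exact integrable_exp_mul_expMeasure' hc)
  exact this

lemma rv_ae_nonneg' {X : Ω → ℝ} (hX : Measurable X) (hdist : Measure.map X P = expMeasure 1) :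
    ∀ᵐ ω ∂P, 0 ≤ X ω := by
  rw [ae_iff]
  have : {ω | ¬ 0 ≤ X ω} = X ⁻¹' (Iio 0) := by ext ω; simp [not_le]
  rw [this, ← Measure.map_apply hX measurableSet_Iio, hdist, expMeasure_Iio_zero']

lemma self_le_exp_mul' {t x : ℝ} (ht : 1/2 ≤ t) : x ≤ Real.exp (t * x) := by
  rcases le_or_gt x 0 with hx | hx
  · exact hx.trans (Real.exp_pos _).le
  · have h1 : t * x ≤ Real.exp (t * x - 1) := by
      have := Real.add_one_le_exp (t * x - 1); linarith
    have h2 : Real.exp (t * x - 1) = Real.exp (t * x) / Real.exp 1 := by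
      rw [Real.exp_sub]
    have he : (2:ℝ) ≤ Real.exp 1 := by
      have := Real.add_one_le_exp (1:ℝ); linarith
    have hepos : (0:ℝ) < Real.exp 1 := Real.exp_pos 1
    have h3 : x / 2 ≤ t * x := by nlinarith
    have h4 : Real.exp (t * x) / Real.exp 1 ≤ Real.exp (t * x) / 2 :=
      div_le_div_of_nonneg_left (Real.exp_pos _).le two_pos he
    nlinarith [Real.exp_pos (t * x)]

end AuxExp

set_option maxHeartbeats 1000000 in
theorem part1 (N' : ℕ) (ρ : ℝ) (hρ : 0 < ρ) :
    Tendsto (fun n : ℕ =>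
      ((1 / (ρ * Real.log n)
        + (n:ℝ) * ρ
          * Real.exp (-((1 - 1/Real.log n) * (ρ * (Real.log n - (((N'+1:ℕ):ℝ) - 1) * Real.log (Real.log n)))) / ρ)
          * Real.log n
          / ((1 + (1 - 1/Real.log n) * (ρ * (Real.log n - (((N'+1:ℕ):ℝ) - 1) * Real.log (Real.log n)))) ^ (N'+1)
              * (1 + ρ * (Real.log n - (((N'+1:ℕ):ℝ) - 1) * Real.log (Real.log n))))) / Real.log 2)
        * Real.log n / Real.log (Real.log n)) atTop (nhds 0) := by
  have hρ' : ρ ≠ 0 := ne_of_gt hρ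
  have hlog2 : (0:ℝ) < Real.log 2 := Real.log_pos one_lt_two
  have hcast : (((N'+1:ℕ)):ℝ) - 1 = (N':ℝ) := by push_cast; ring
  have hlogT : Tendsto (fun n : ℕ => Real.log n) atTop atTop :=
    Real.tendsto_log_atTop.comp tendsto_natCast_atTop_atTop
  have hloglogT : Tendsto (fun n : ℕ => Real.log (Real.log n)) atTop atTop :=
    Real.tendsto_log_atTop.comp hlogT
  have ev1 : ∀ᶠ n : ℕ in atTop, 2 ≤ Real.log n := hlogT.eventually_ge_atTop 2
  have hdiv0 : Tendsto (fun x : ℝ => Real.log x / x) atTop (nhds 0) :=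
    Real.isLittleO_log_id_atTop.tendsto_div_nhds_zero
  have ev2 : ∀ᶠ n : ℕ in atTop,
      (((N'+1:ℕ):ℝ) - 1) * Real.log (Real.log n) ≤ Real.log n / 2 := by
    have h2 : Tendsto (fun n : ℕ => (((N'+1:ℕ):ℝ) - 1) * (Real.log (Real.log n) / Real.log n))
        atTop (nhds 0) := by
      simpa using ((hdiv0.comp hlogT).const_mul (((N'+1:ℕ):ℝ) - 1))
    filter_upwards [h2.eventually (eventually_le_nhds (by norm_num : (0:ℝ) < 1/2)), ev1]
      with n hn hL2
    have hLpos : (0:ℝ) < Real.log n := by linarith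
    have h3 : ((((N'+1:ℕ):ℝ) - 1) * (Real.log (Real.log n) / Real.log n)) * Real.log n
        ≤ 1/2 * Real.log n := mul_le_mul_of_nonneg_right hn hLpos.le
    have h4 : ((((N'+1:ℕ):ℝ) - 1) * (Real.log (Real.log n) / Real.log n)) * Real.log n
        = (((N'+1:ℕ):ℝ) - 1) * Real.log (Real.log n) := by
      field_simp
    rw [h4] at h3; linarith
  set D : ℝ := Real.exp 1 * ρ * 2 * 4 ^ (N'+1) / ρ ^ (N'+2) with hD
  have hD0 : 0 ≤ D := by positivity
  apply squeeze_zero' (g := fun n : ℕ => ((1/ρ + D)/Real.log 2) / Real.log (Real.log n))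
  · -- nonneg
    filter_upwards [ev1, ev2] with n hL2 hNM
    set l : ℝ := Real.log n with hld
    set m : ℝ := Real.log l with hmd
    have hl0 : (0:ℝ) < l := lt_of_lt_of_le two_pos hL2
    have hm0 : 0 ≤ m := Real.log_nonneg (by linarith)
    have hN1 : (0:ℝ) ≤ ((N'+1:ℕ):ℝ) - 1 := by rw [hcast]; positivity
    set a : ℝ := ρ * (l - (((N'+1:ℕ):ℝ) - 1) * m) with had
    set θ : ℝ := 1 - 1/l with hθd
    have ha2 : ρ * (l/2) ≤ a := by
      rw [had]; apply mul_le_mul_of_nonneg_left _ hρ.le; linarith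
    have ha0 : 0 < a := lt_of_lt_of_le (by positivity) ha2
    have hθhalf : 1/2 ≤ θ := by
      have : 1/l ≤ 1/2 := one_div_le_one_div_of_le two_pos hL2
      rw [hθd]; linarith
    have hθ0 : 0 < θ := lt_of_lt_of_le one_half_pos hθhalf
    have h1a : (0:ℝ) < 1 + a := by linarith
    have h1θa : (0:ℝ) < 1 + θ * a := by nlinarith
    have hT0 : 0 ≤ (n:ℝ) * ρ * Real.exp (-(θ * a) / ρ) * l
        / ((1 + θ * a) ^ (N'+1) * (1 + a)) := by
      apply div_nonneg (by positivity)
      exact mul_nonneg (pow_nonneg h1θa.le _) h1a.le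
    have h10 : 0 ≤ 1 / (ρ * l) := by positivity
    apply div_nonneg _ hm0
    apply mul_nonneg _ hl0.le
    apply div_nonneg _ hlog2.le
    linarith
  · -- the bound
    filter_upwards [ev1, ev2, eventually_ge_atTop 1] with n hL2 hNM hn1
    set l : ℝ := Real.log n with hld
    set m : ℝ := Real.log l with hmd
    have hl0 : (0:ℝ) < l := lt_of_lt_of_le two_pos hL2
    have hl0' : l ≠ 0 := ne_of_gt hl0
    have hm0 : (0:ℝ) < m := Real.log_pos (by linarith)
    have hN1 : (0:ℝ) ≤ ((N'+1:ℕ):ℝ) - 1 := by rw [hcast]; positivity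
    have hNm0 : 0 ≤ (((N'+1:ℕ):ℝ) - 1) * m :=
      mul_nonneg hN1 (Real.log_nonneg (by linarith))
    set a : ℝ := ρ * (l - (((N'+1:ℕ):ℝ) - 1) * m) with had
    set θ : ℝ := 1 - 1/l with hθd
    have ha2 : ρ * (l/2) ≤ a := by
      rw [had]; apply mul_le_mul_of_nonneg_left _ hρ.le; linarith
    have ha0 : 0 < a := lt_of_lt_of_le (by positivity) ha2
    have hθhalf : 1/2 ≤ θ := by
      have : 1/l ≤ 1/2 := one_div_le_one_div_of_le two_pos hL2
      rw [hθd]; linarith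
    have hθ0 : 0 < θ := lt_of_lt_of_le one_half_pos hθhalf
    have h1a : (0:ℝ) < 1 + a := by linarith
    have h1θa : (0:ℝ) < 1 + θ * a := by nlinarith
    have hθa4 : ρ * l / 4 ≤ θ * a := by
      have := mul_le_mul hθhalf ha2 (by positivity) (by linarith)
      nlinarith
    set T2 : ℝ := (n:ℝ) * ρ * Real.exp (-(θ * a) / ρ) * l
        / ((1 + θ * a) ^ (N'+1) * (1 + a)) with hT2
    -- key exponential bound
    have hn0 : (0:ℝ) < (n:ℝ) := by exact_mod_cast Nat.lt_of_lt_of_le Nat.zero_lt_one hn1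
    have hnl : (n:ℝ) = Real.exp l := (Real.exp_log hn0).symm
    have hccl : (N':ℝ) * m ≤ l / 2 := by rw [← hcast]; exact hNM
    have hcc0 : 0 ≤ (N':ℝ) * m := by positivity
    have harg : -(θ * a) / ρ ≤ -l + (N':ℝ) * m + 1 := by
      have hfrac : (l - (N':ℝ)*m)/l ≤ 1 := by
        rw [div_le_one hl0]; linarith
      have hexpand : θ * (l - (N':ℝ)*m) = (l - (N':ℝ)*m) - (l - (N':ℝ)*m)/l := by
        rw [hθd]; field_simp
      have haθ : -(θ * a) / ρ = -(θ * (l - (N':ℝ)*m)) := by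
        rw [had, hcast]; field_simp
      rw [haθ, hexpand]; linarith
    have hnexp : (n:ℝ) * Real.exp (-(θ * a) / ρ) ≤ Real.exp 1 * l ^ N' := by
      calc (n:ℝ) * Real.exp (-(θ * a) / ρ)
          ≤ (n:ℝ) * Real.exp (-l + (N':ℝ) * m + 1) := by
            exact mul_le_mul_of_nonneg_left (Real.exp_le_exp.2 harg) hn0.le
        _ = Real.exp ((N':ℝ) * m + 1) := by
            rw [hnl, ← Real.exp_add]; ring_nf
        _ = Real.exp ((N':ℝ) * m) * Real.exp 1 := by rw [← Real.exp_add]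
        _ = (Real.exp m) ^ N' * Real.exp 1 := by rw [← Real.exp_nat_mul]
        _ = l ^ N' * Real.exp 1 := by rw [hmd, Real.exp_log hl0]
        _ = Real.exp 1 * l ^ N' := by ring
    have hnum : (n:ℝ) * ρ * Real.exp (-(θ * a) / ρ) * l * l
        ≤ Real.exp 1 * ρ * l ^ (N' + 2) := by
      calc (n:ℝ) * ρ * Real.exp (-(θ * a) / ρ) * l * l
          = ((n:ℝ) * Real.exp (-(θ * a) / ρ)) * (ρ * l * l) := by ring
        _ ≤ (Real.exp 1 * l ^ N') * (ρ * l * l) :=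
            mul_le_mul_of_nonneg_right hnexp (by positivity)
        _ = Real.exp 1 * ρ * l ^ (N' + 2) := by ring
    have hdlow0 : (0:ℝ) < (ρ*l/4)^(N'+1) * (ρ*l/2) := by positivity
    have hden : (ρ*l/4)^(N'+1) * (ρ*l/2) ≤ (1 + θ * a) ^ (N'+1) * (1 + a) := by
      apply mul_le_mul _ (by linarith) (by positivity) (pow_nonneg h1θa.le _)
      exact pow_le_pow_left₀ (by positivity) (by linarith) _
    have hT2l : T2 * l ≤ D := by
      have e1 : T2 * l = ((n:ℝ) * ρ * Real.exp (-(θ * a) / ρ) * l * l)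
          / ((1 + θ * a) ^ (N'+1) * (1 + a)) := by
        rw [hT2]; ring
      rw [e1]
      calc ((n:ℝ) * ρ * Real.exp (-(θ * a) / ρ) * l * l)
            / ((1 + θ * a) ^ (N'+1) * (1 + a))
          ≤ ((n:ℝ) * ρ * Real.exp (-(θ * a) / ρ) * l * l) / ((ρ*l/4)^(N'+1) * (ρ*l/2)) := by
            apply div_le_div_of_nonneg_left (by positivity) hdlow0 hden
        _ ≤ (Real.exp 1 * ρ * l ^ (N' + 2)) / ((ρ*l/4)^(N'+1) * (ρ*l/2)) := by gcongr
        _ = D := by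
            rw [hD, div_pow, mul_pow]
            rw [div_eq_div_iff (by positivity) (by positivity)]
            field_simp
            ring
    -- conclude
    have hX : (1 / (ρ * l) + T2) / Real.log 2 * l ≤ (1/ρ + D)/Real.log 2 := by
      have e2 : (1 / (ρ * l) + T2) / Real.log 2 * l = (1/(ρ*l)*l + T2*l)/Real.log 2 := by ring
      have e3 : 1/(ρ*l)*l = 1/ρ := by field_simp
      rw [e2, e3]
      gcongr
    exact (div_le_div_iff_of_pos_right hm0).mpr hX
  · exact Tendsto.div_atTop tendsto_const_nhds hloglogT

set_option maxHeartbeats 1000000 in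
theorem part2
    {Ω : Type*} [MeasurableSpace Ω] (P : Measure Ω) [IsProbabilityMeasure P]
    (N' : ℕ) (ρ : ℝ) (hρ : 0 < ρ)
    (G : Option (Fin (N'+1)) × ℕ → Ω → ℝ) (hGmeas : ∀ i, Measurable (G i))
    (hGindep : iIndepFun G P)
    (hGdist : ∀ i, Measure.map (G i) P = expMeasure 1)
    (α β : ℕ → Ω → ℝ)
    (hα : ∀ k ω, α k ω = ρ * G (none, k) ω)
    (hβ : ∀ k ω, β k ω = ρ * ∑ j : Fin (N'+1), G (some j, k) ω)
    (Γ : ℕ → Ω → ℝ) (hΓ : ∀ n ω, Γ n ω = maxIcc n (fun k => α k ω / (1 + β k ω)))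
    (n : ℕ) (hn1 : 1 ≤ n)
    (hL2 : 2 ≤ Real.log n)
    (hNM : (((N'+1:ℕ):ℝ) - 1) * Real.log (Real.log n) ≤ Real.log n / 2) :
    (∫ ω, Real.logb 2 (1 + Γ n ω) ∂P)
      ≤ Real.logb 2 (ρ * Real.log n)
        - (((N'+1:ℕ) : ℝ) - 1) * Real.logb 2 (Real.log n) / Real.log n
        + (1 / (ρ * Real.log n)
            + (n:ℝ) * ρ
              * Real.exp (-((1 - 1/Real.log n) * (ρ * (Real.log n - (((N'+1:ℕ):ℝ) - 1) * Real.log (Real.log n)))) / ρ)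
              * Real.log n
              / ((1 + (1 - 1/Real.log n) * (ρ * (Real.log n - (((N'+1:ℕ):ℝ) - 1) * Real.log (Real.log n)))) ^ (N'+1)
                  * (1 + ρ * (Real.log n - (((N'+1:ℕ):ℝ) - 1) * Real.log (Real.log n))))) / Real.log 2 := by
  have hρ' : ρ ≠ 0 := ne_of_gt hρ
  have hlog2 : (0:ℝ) < Real.log 2 := Real.log_pos one_lt_two
  set l : ℝ := Real.log n with hld
  set m : ℝ := Real.log l with hmd
  have hl0 : (0:ℝ) < l := lt_of_lt_of_le two_pos hL2
  have hl0' : l ≠ 0 := ne_of_gt hl0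
  have hm0 : 0 ≤ m := Real.log_nonneg (by linarith)
  have hN1 : (0:ℝ) ≤ ((N'+1:ℕ):ℝ) - 1 := by push_cast; linarith
  have hNm0 : 0 ≤ (((N'+1:ℕ):ℝ) - 1) * m := mul_nonneg hN1 hm0
  set a : ℝ := ρ * (l - (((N'+1:ℕ):ℝ) - 1) * m) with had
  set θ : ℝ := 1 - 1/l with hθd
  have ha2 : ρ * (l/2) ≤ a := by
    rw [had]; apply mul_le_mul_of_nonneg_left _ hρ.le; linarith
  have ha0 : 0 < a := lt_of_lt_of_le (by positivity) ha2
  have hθhalf : 1/2 ≤ θ := by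
    have : 1/l ≤ 1/2 := one_div_le_one_div_of_le two_pos hL2
    rw [hθd]; linarith
  have hθ1 : θ < 1 := by
    rw [hθd]; have : 0 < 1/l := by positivity
    linarith
  have hθ0 : 0 < θ := lt_of_lt_of_le one_half_pos hθhalf
  have hθa0 : 0 < θ * a := mul_pos hθ0 ha0
  have h1a : (0:ℝ) < 1 + a := by linarith
  have h1θa : (0:ℝ) < 1 + θ * a := by linarith
  -- the scaled family
  set cf : Option (Fin (N'+1)) × ℕ → ℝ := fun p => Option.elim p.1 θ (fun _ => -(θ*a)) with hcf
  set Y : Option (Fin (N'+1)) × ℕ → Ω → ℝ := fun i ω => cf i * G i ω with hY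
  have hYindep : iIndepFun Y P :=
    hGindep.comp (fun i x => cf i * x) (fun i => measurable_id.const_mul _)
  have hYmeas : ∀ i, Measurable (Y i) := fun i => (hGmeas i).const_mul _
  have hcf1 : ∀ i, cf i < 1 := by
    rintro ⟨(_ | j), k⟩
    · simpa [hcf] using hθ1
    · simp only [hcf, Option.elim]
      nlinarith
  set s : ℕ → Finset (Option (Fin (N'+1)) × ℕ) := fun k =>
    Finset.univ.map ⟨fun i => (i, k), (show Function.Injective (fun i : Option (Fin (N'+1)) => (i, k)) from
      fun i i' hii => (Prod.mk.inj hii).1)⟩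
    with hs
  have hW : ∀ k ω, (∑ i ∈ s k, Y i) ω
      = θ * G (none, k) ω - θ * a * (∑ j : Fin (N'+1), G (some j, k) ω) := by
    intro k ω
    simp only [hs, hY, Finset.sum_apply, Finset.sum_map, Function.Embedding.coeFn_mk,
      Fintype.sum_option, hcf, Option.elim, neg_mul]
    rw [Finset.sum_neg_distrib, Finset.mul_sum]
    ring
  have hint : ∀ k, Integrable (fun ω => Real.exp ((∑ i ∈ s k, Y i) ω)) P := by
    intro k
    have := hYindep.integrable_exp_mul_sum (t := 1) hYmeas (s := s k) (fun i _ => by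
      simpa [hY, one_mul] using rv_integrable_exp' (hGmeas i) (hGdist i) (hcf1 i))
    simpa [one_mul] using this
  have hmgf : ∀ k, ∫ ω, Real.exp ((∑ i ∈ s k, Y i) ω) ∂P = l * ((1 + θ*a)⁻¹)^(N'+1) := by
    intro k
    have hm := hYindep.mgf_sum hYmeas (s k) (t := 1)
    have hexp : mgf (∑ i ∈ s k, Y i) P 1 = ∫ ω, Real.exp ((∑ i ∈ s k, Y i) ω) ∂P := by
      simp [mgf, one_mul]
    rw [← hexp, hm]
    have hval : ∀ i, mgf (Y i) P 1 = (1 - cf i)⁻¹ := by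
      intro i
      simp only [mgf, hY, one_mul]
      exact rv_integral_exp' (hGmeas i) (hGdist i) (hcf1 i)
    rw [hs]
    rw [Finset.prod_map]
    simp only [Function.Embedding.coeFn_mk]
    rw [Fintype.prod_option]
    simp only [hval, hcf, Option.elim]
    rw [Finset.prod_const, Finset.card_univ, Fintype.card_fin]
    have h1 : (1 - θ)⁻¹ = l := by rw [hθd]; field_simp; ring
    have h2 : (1 - -(θ*a)) = 1 + θ*a := by ring
    rw [h1, h2]
  -- a.e. facts
  have hGnn : ∀ᵐ ω ∂P, ∀ i, 0 ≤ G i ω :=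
    ae_all_iff.2 fun i => rv_ae_nonneg' (hGmeas i) (hGdist i)
  set E : ℝ := ρ * Real.exp (-(θ*a)/ρ) with hE
  have hE0 : 0 ≤ E := by positivity
  set F : Ω → ℝ := fun ω =>
    (Real.log (1+a) + (E * ∑ k ∈ Finset.Icc 1 n, Real.exp ((∑ i ∈ s k, Y i) ω)) / (1+a))
      / Real.log 2 with hF
  have hFint : Integrable F P := by
    apply Integrable.div_const
    apply Integrable.add (integrable_const _)
    exact ((integrable_finset_sum _ fun k _ => hint k).const_mul E).div_const (1+a)
  have hgood : ∀ᵐ ω ∂P, 0 ≤ Γ n ω ∧ Real.logb 2 (1 + Γ n ω) ≤ F ω := by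
    filter_upwards [hGnn] with ω hω
    have hXle : ∀ k, α k ω / (1 + β k ω) - a ≤ E * Real.exp ((∑ i ∈ s k, Y i) ω) := by
      intro k
      rw [hα, hβ, hW]
      set g : ℝ := G (none, k) ω with hgd
      set ss : ℝ := ∑ j : Fin (N'+1), G (some j, k) ω with hssd
      have hg : 0 ≤ g := hω _
      have hss : 0 ≤ ss := Finset.sum_nonneg fun j _ => hω _
      have hden : (1:ℝ) ≤ 1 + ρ * ss := by nlinarith
      have hden0 : (0:ℝ) < 1 + ρ * ss := by linarith
      have hsplit : ρ * g / (1 + ρ * ss) - a = (ρ*g - a*(1 + ρ*ss))/(1 + ρ*ss) := by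
        field_simp
      rw [hsplit]
      rcases le_or_gt (ρ*g - a*(1 + ρ*ss)) 0 with hnum | hnum
      · have hle0 : (ρ*g - a*(1+ρ*ss))/(1+ρ*ss) ≤ 0 :=
          div_nonpos_of_nonpos_of_nonneg hnum hden0.le
        exact hle0.trans (by positivity)
      · have h1 : (ρ*g - a*(1+ρ*ss))/(1+ρ*ss) ≤ ρ*g - a*(1+ρ*ss) := by
          rw [div_le_iff₀ hden0]; nlinarith
        set x : ℝ := g - a/ρ - a*ss with hx
        have h2 : ρ*g - a*(1+ρ*ss) = ρ * x := by rw [hx]; field_simp; ring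
        have h3 : x ≤ Real.exp (θ * x) := self_le_exp_mul' hθhalf
        have h4 : E * Real.exp (θ*g - θ*a*ss) = ρ * Real.exp (θ * x) := by
          rw [hE, mul_assoc, ← Real.exp_add]
          congr 2
          rw [hx]; field_simp; ring
        have h5 : ρ * x ≤ ρ * Real.exp (θ * x) := mul_le_mul_of_nonneg_left h3 hρ.le
        rw [h4]
        exact (h1.trans_eq h2).trans h5
    have hΓ0 : 0 ≤ Γ n ω := by
      rw [hΓ]; unfold maxIcc
      apply Real.iSup_nonneg
      intro k
      apply div_nonneg
      · rw [hα]; exact mul_nonneg hρ.le (hω _)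
      · rw [hβ]
        have : 0 ≤ ∑ j : Fin (N'+1), G (some j, (k:ℕ)) ω := Finset.sum_nonneg fun j _ => hω _
        nlinarith
    refine ⟨hΓ0, ?_⟩
    have hΓle : Γ n ω - a ≤ E * ∑ k ∈ Finset.Icc 1 n, Real.exp ((∑ i ∈ s k, Y i) ω) := by
      rw [hΓ]; unfold maxIcc
      rw [sub_le_iff_le_add]
      haveI : Nonempty {x // x ∈ Finset.Icc 1 n} :=
        ⟨⟨1, Finset.mem_Icc.mpr ⟨le_refl 1, hn1⟩⟩⟩
      apply ciSup_le
      intro k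
      have h5 := hXle (k : ℕ)
      have h6 : Real.exp ((∑ i ∈ s (k:ℕ), Y i) ω)
          ≤ ∑ k' ∈ Finset.Icc 1 n, Real.exp ((∑ i ∈ s k', Y i) ω) :=
        Finset.single_le_sum (f := fun k' => Real.exp ((∑ i ∈ s k', Y i) ω))
          (fun k' _ => (Real.exp_pos _).le) k.2
      have := mul_le_mul_of_nonneg_left h6 hE0
      simp only
      linarith
    have hpos : 0 < 1 + Γ n ω := by linarith
    have hq : 0 < (1 + Γ n ω)/(1+a) := div_pos hpos h1a
    have hlg := Real.log_le_sub_one_of_pos hq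
    rw [Real.log_div (ne_of_gt hpos) (ne_of_gt h1a)] at hlg
    have heq : (1 + Γ n ω)/(1+a) - 1 = (Γ n ω - a)/(1+a) := by field_simp; ring
    have hlog1 : Real.log (1 + Γ n ω) ≤ Real.log (1+a) + (Γ n ω - a)/(1+a) := by
      rw [heq] at hlg; linarith
    have hdivle : (Γ n ω - a)/(1+a)
        ≤ (E * ∑ k ∈ Finset.Icc 1 n, Real.exp ((∑ i ∈ s k, Y i) ω))/(1+a) := by
      gcongr
    have hnum : Real.log (1 + Γ n ω)
        ≤ Real.log (1+a) + (E * ∑ k ∈ Finset.Icc 1 n, Real.exp ((∑ i ∈ s k, Y i) ω))/(1+a) := by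
      linarith
    calc Real.logb 2 (1 + Γ n ω) = Real.log (1 + Γ n ω) / Real.log 2 := rfl
      _ ≤ (Real.log (1+a)
            + (E * ∑ k ∈ Finset.Icc 1 n, Real.exp ((∑ i ∈ s k, Y i) ω))/(1+a)) / Real.log 2 := by
          gcongr
      _ = F ω := by rw [hF]
  have hae0 : 0 ≤ᵐ[P] fun ω => Real.logb 2 (1 + Γ n ω) := by
    filter_upwards [hgood] with ω hω
    exact Real.logb_nonneg one_lt_two (by linarith [hω.1])
  have hmono : (∫ ω, Real.logb 2 (1 + Γ n ω) ∂P) ≤ ∫ ω, F ω ∂P :=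
    integral_mono_of_nonneg hae0 hFint (by filter_upwards [hgood] with ω hω using hω.2)
  -- compute ∫ F
  have hFeq : ∫ ω, F ω ∂P
      = (Real.log (1+a) + (E * ((n:ℝ) * (l * ((1 + θ*a)⁻¹)^(N'+1))))/(1+a)) / Real.log 2 := by
    rw [hF]
    simp only
    rw [integral_div]
    congr 1
    rw [integral_add (integrable_const _)
      (((integrable_finset_sum _ fun k _ => hint k).const_mul E).div_const (1+a))]
    congr 1
    · simp
    rw [integral_div, integral_const_mul E, integral_finset_sum _ (fun k _ => hint k)]
    congr 2
    rw [Finset.sum_congr rfl (fun k _ => hmgf k), Finset.sum_const, Nat.card_Icc]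
    simp only [Nat.add_sub_cancel, nsmul_eq_mul]
  -- final arithmetic
  have key1 : Real.log (1+a) ≤ Real.log (ρ*l) - (((N'+1:ℕ):ℝ) - 1) * m / l + 1/(ρ*l) := by
    set u : ℝ := 1/(ρ*l) - (((N'+1:ℕ):ℝ) - 1) * m / l with hu
    have hfac : 1 + a = (ρ*l)*(1+u) := by
      rw [had, hu]; field_simp; ring
    have hhalf : (((N'+1:ℕ):ℝ) - 1) * m / l ≤ 1/2 := by
      rw [div_le_iff₀ hl0]; linarith
    have hu0 : 0 < 1 + u := by
      have h7 : 0 < 1/(ρ*l) := by positivity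
      rw [hu]; linarith
    have hlm : Real.log (1+a) = Real.log (ρ*l) + Real.log (1+u) := by
      rw [hfac, Real.log_mul (by positivity) (ne_of_gt hu0)]
    have hlu : Real.log (1+u) ≤ u := by
      have := Real.log_le_sub_one_of_pos hu0; linarith
    rw [hlm, hu] at *
    linarith
  have key2 : (E * ((n:ℝ) * (l * ((1 + θ*a)⁻¹)^(N'+1))))/(1+a)
      = (n:ℝ) * ρ * Real.exp (-(θ*a)/ρ) * l / ((1 + θ*a)^(N'+1) * (1+a)) := by
    rw [hE, inv_pow]
    field_simp
  calc (∫ ω, Real.logb 2 (1 + Γ n ω) ∂P) ≤ ∫ ω, F ω ∂P := hmono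
    _ = (Real.log (1+a) + (E * ((n:ℝ) * (l * ((1 + θ*a)⁻¹)^(N'+1))))/(1+a)) / Real.log 2 := hFeq
    _ ≤ _ := by
        rw [key2]
        simp only [Real.logb]
        have hrhs : Real.log (ρ * l) / Real.log 2
            - (((N'+1:ℕ):ℝ) - 1) * (Real.log l / Real.log 2) / l
            + (1 / (ρ * l)
              + (n:ℝ) * ρ * Real.exp (-(θ*a)/ρ) * l / ((1 + θ*a)^(N'+1) * (1+a))) / Real.log 2
            = (Real.log (ρ*l) - (((N'+1:ℕ):ℝ) - 1) * Real.log l / l + 1/(ρ*l)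
                + (n:ℝ) * ρ * Real.exp (-(θ*a)/ρ) * l / ((1 + θ*a)^(N'+1) * (1+a)))
              / Real.log 2 := by
          field_simp
          ring
        rw [← hmd] at hrhs ⊢
        rw [hrhs]
        have : Real.log (1+a) ≤ Real.log (ρ*l) - (((N'+1:ℕ):ℝ) - 1) * Real.log l / l + 1/(ρ*l) := by
          rw [← hmd]; exact key1
        gcongr ?_ / _
        linarith

/-- Lemma 2, upper bound: in the symmetric model, the average rate of the max-SINR
scheduler satisfies
`E[log₂(1+Γ n)] ≤ log₂(ρ log n) - (N-1) log₂(log n)/log n + o(log(log n)/log n)`. -/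
theorem maxSINR_rate_upper_bound
    {Ω : Type*} [MeasurableSpace Ω] (P : Measure Ω) [IsProbabilityMeasure P]
    (N : ℕ) (hN : 1 ≤ N) (ρ : ℝ) (hρ : 0 < ρ)
    (G : Option (Fin N) × ℕ → Ω → ℝ) (hGmeas : ∀ i, Measurable (G i))
    (hGindep : iIndepFun G P)
    (hGdist : ∀ i, Measure.map (G i) P = expMeasure 1)
    (α β : ℕ → Ω → ℝ)
    (hα : ∀ k ω, α k ω = ρ * G (none, k) ω)
    (hβ : ∀ k ω, β k ω = ρ * ∑ j : Fin N, G (some j, k) ω)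
    (Γ : ℕ → Ω → ℝ) (hΓ : ∀ n ω, Γ n ω = maxIcc n (fun k => α k ω / (1 + β k ω))) :
    ∃ h : ℕ → ℝ,
      Tendsto (fun n : ℕ => h n * Real.log n / Real.log (Real.log n)) atTop (nhds 0) ∧
      ∀ᶠ n : ℕ in atTop,
        (∫ ω, Real.logb 2 (1 + Γ n ω) ∂P)
          ≤ Real.logb 2 (ρ * Real.log n)
            - ((N : ℝ) - 1) * Real.logb 2 (Real.log n) / Real.log n + h n := by
  obtain ⟨N', rfl⟩ : ∃ N', N = N' + 1 := ⟨N - 1, by omega⟩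
  refine ⟨fun n : ℕ =>
    (1 / (ρ * Real.log n)
      + (n:ℝ) * ρ
        * Real.exp (-((1 - 1/Real.log n) * (ρ * (Real.log n - (((N'+1:ℕ):ℝ) - 1) * Real.log (Real.log n)))) / ρ)
        * Real.log n
        / ((1 + (1 - 1/Real.log n) * (ρ * (Real.log n - (((N'+1:ℕ):ℝ) - 1) * Real.log (Real.log n)))) ^ (N'+1)
            * (1 + ρ * (Real.log n - (((N'+1:ℕ):ℝ) - 1) * Real.log (Real.log n))))) / Real.log 2,
    ?_, ?_⟩
  · exact part1 N' ρ hρ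
  · have hlogT : Tendsto (fun n : ℕ => Real.log n) atTop atTop :=
      Real.tendsto_log_atTop.comp tendsto_natCast_atTop_atTop
    have ev1 : ∀ᶠ n : ℕ in atTop, 2 ≤ Real.log n := hlogT.eventually_ge_atTop 2
    have hdiv0 : Tendsto (fun x : ℝ => Real.log x / x) atTop (nhds 0) :=
      Real.isLittleO_log_id_atTop.tendsto_div_nhds_zero
    have ev2 : ∀ᶠ n : ℕ in atTop,
        (((N'+1:ℕ):ℝ) - 1) * Real.log (Real.log n) ≤ Real.log n / 2 := by
      have h2 : Tendsto (fun n : ℕ => (((N'+1:ℕ):ℝ) - 1) * (Real.log (Real.log n) / Real.log n))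
          atTop (nhds 0) := by
        simpa using ((hdiv0.comp hlogT).const_mul (((N'+1:ℕ):ℝ) - 1))
      filter_upwards [h2.eventually (eventually_le_nhds (by norm_num : (0:ℝ) < 1/2)), ev1]
        with n hn hL2
      have hLpos : (0:ℝ) < Real.log n := by linarith
      have h3 : ((((N'+1:ℕ):ℝ) - 1) * (Real.log (Real.log n) / Real.log n)) * Real.log n
          ≤ 1/2 * Real.log n := mul_le_mul_of_nonneg_right hn hLpos.le
      have h4 : ((((N'+1:ℕ):ℝ) - 1) * (Real.log (Real.log n) / Real.log n)) * Real.log n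
          = (((N'+1:ℕ):ℝ) - 1) * Real.log (Real.log n) := by
        field_simp
      rw [h4] at h3; linarith
    filter_upwards [ev1, ev2, eventually_ge_atTop 1] with n hL2 hNM hn1
    exact part2 P N' ρ hρ G hGmeas hGindep hGdist α β hα hβ Γ hΓ n hn1 hL2 hNM
end
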